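/- arXiv:2212.04166 — 9 statements merged into one kernel-verified Lean document; each statement's English description precedes it below -/
import Mathlib

section
/- In a connected graph G with at least two vertices, a cut vertex (separation vertex) is not maximally distant from any vertex of G. -/
open SimpleGraph

/-- `y` is maximally distant from `x` in `G`: no neighbor of `y` is farther from `x` than `y`. -/
def MaxDistantFrom {V : Type*} (G : SimpleGraph V) (y x : V) : Prop :=
  ∀ z, G.Adj y z → G.dist z x ≤ G.dist y x

/-- `u` and `v` are mutually maximally distant in `G`. -/
def MutuallyMaxDistant {V : Type*} (G : SimpleGraph V) (u v : V) : Prop :=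
  MaxDistantFrom G u v ∧ MaxDistantFrom G v u

/-- The strong resolving graph of `G`: edges are the mutually maximally distant pairs. -/
def srGraph {V : Type*} (G : SimpleGraph V) : SimpleGraph V where
  Adj u v := u ≠ v ∧ MutuallyMaxDistant G u v
  symm := ⟨fun u v h => ⟨h.1.symm, h.2.2, h.2.1⟩⟩
  loopless := ⟨fun u h => h.1 rfl⟩

/-- `w` strongly resolves `u` and `v`: `v` lies on a shortest `w`–`u` path, or
`u` lies on a shortest `w`–`v` path. -/
def StronglyResolves {V : Type*} (G : SimpleGraph V) (w u v : V) : Prop :=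
  G.dist w v + G.dist v u = G.dist w u ∨ G.dist w u + G.dist u v = G.dist w v

/-- `R` is a strong resolving set for `G`. -/
def StrongResolvingSet {V : Type*} (G : SimpleGraph V) (R : Set V) : Prop :=
  ∀ u v : V, u ≠ v → ∃ w ∈ R, StronglyResolves G w u v

/-- A cut vertex of a connected graph with at least two vertices is not maximally
distant from any vertex. -/
theorem cut_vertex_not_maxDistant {V : Type*} [Fintype V] (G : SimpleGraph V)
    (hG : G.Connected) (hV : Nontrivial V) (s : V)
    (hs : ¬ (G.induce {v | v ≠ s}).Preconnected) :
    ∀ w : V, ¬ MaxDistantFrom G s w := by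
  intro w hmax
  by_cases hws : w = s
  · -- w = s: s has a neighbor z, dist z s ≤ dist s s = 0, contradiction
    subst hws
    haveI := hV
    obtain ⟨t, ht⟩ := exists_ne w
    obtain ⟨p, hp⟩ := (hG w t).exists_walk_length_eq_dist
    cases p with
    | nil => exact absurd rfl ht
    | cons hadj q =>
      rename_i z
      have h1 := hmax z hadj
      have h2 : G.dist w w = 0 := by simp
      have h3 : G.dist z w ≠ 0 := fun h =>
        hadj.ne' ((hG.dist_eq_zero_iff).mp h)
      omega
  · -- w ≠ s: show the induced graph is preconnected
    apply hs
    have hw : w ∈ {v | v ≠ s} := hws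
    -- key: every v ≠ s reaches w in the induced graph
    have key : ∀ n (v : V) (hv : v ≠ s), G.dist v w = n →
        (G.induce {v | v ≠ s}).Reachable ⟨v, hv⟩ ⟨w, hw⟩ := by
      intro n
      induction n using Nat.strong_induction_on with
      | _ n ih =>
        intro v hv hd
        by_cases hvw : v = w
        · subst hvw; rfl
        · obtain ⟨p, hp⟩ := (hG v w).exists_walk_length_eq_dist
          cases p with
          | nil => exact absurd rfl hvw
          | cons hadj q =>
            rename_i z
            have hzw : G.dist z w ≤ q.length := SimpleGraph.dist_le q
            have hql : q.length + 1 = n := by rw [← hd, ← hp]; simp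
            have hdz : G.dist z w < n := by omega
            have hzs : z ≠ s := by
              intro h
              have hm := hmax v (h ▸ hadj.symm)
              have hsw : G.dist s w < n := h ▸ hdz
              omega
            have hadj' : (G.induce {v | v ≠ s}).Adj ⟨v, hv⟩ ⟨z, hzs⟩ := by
              simpa using hadj
            exact hadj'.reachable.trans (ih _ hdz z hzs rfl)
    intro a b
    exact (key _ a.1 a.2 rfl).trans (key _ b.1 b.2 rfl).symm
end

section
/- A vertex set R ⊆ V is a strong resolving set for a connected graph G if and only if R is a vertex cover of the strong resolving graph G_SR of G. -/
open SimpleGraph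

/-- In a connected graph, if `w ≠ v` there is a neighbor of `v` strictly closer to `w`. -/
lemma exists_adj_closer {V : Type*} {G : SimpleGraph V} (hG : G.Connected) {w v : V}
    (hwv : w ≠ v) : ∃ z, G.Adj v z ∧ G.dist w z + 1 ≤ G.dist w v := by
  obtain ⟨p, hp⟩ := hG.exists_walk_length_eq_dist v w
  cases p with
  | nil =>
    exact absurd ((hG.dist_eq_zero_iff).mp (by simpa using hp.symm)).symm hwv
  | cons h q =>
    rename_i x
    refine ⟨x, h, ?_⟩
    have h1 : G.dist x w ≤ q.length := SimpleGraph.dist_le q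
    have h2 : q.length + 1 = G.dist v w := by simpa using hp
    have c1 : G.dist w x = G.dist x w := dist_comm
    have c2 : G.dist w v = G.dist v w := dist_comm
    omega

/-- From any vertex `u` one can reach a vertex `u'` maximally distant from `v`
with `u` on a shortest `u'`–`v` path. -/
lemma exists_maxDistant {V : Type*} [Fintype V] {G : SimpleGraph V} (hG : G.Connected)
    (u v : V) : ∃ u', MaxDistantFrom G u' v ∧ G.dist u' v = G.dist u' u + G.dist u v := by
  classical
  set S : Finset V := Finset.univ.filter (fun x => G.dist x v = G.dist x u + G.dist u v) with hS
  have huS : u ∈ S := by simp [hS, SimpleGraph.dist_self]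
  obtain ⟨u', hu'S, hmax⟩ := S.exists_max_image (fun x => G.dist x v) ⟨u, huS⟩
  have hu'eq : G.dist u' v = G.dist u' u + G.dist u v := by
    simpa [hS] using hu'S
  refine ⟨u', ?_, hu'eq⟩
  intro z hz
  by_contra hlt
  push_neg at hlt
  have hadj1 : G.dist z u' ≤ 1 := by
    have := SimpleGraph.dist_le hz.symm.toWalk
    simpa using this
  have t1 : G.dist z v ≤ G.dist z u' + G.dist u' v := hG.dist_triangle
  have t2 : G.dist z u ≤ G.dist z u' + G.dist u' u := hG.dist_triangle
  have t3 : G.dist z v ≤ G.dist z u + G.dist u v := hG.dist_triangle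
  have hzS : z ∈ S := by
    simp only [hS, Finset.mem_filter, Finset.mem_univ, true_and]
    omega
  have := hmax z hzS
  omega

/-- `R` is a strong resolving set for a connected graph `G` iff `R` is a vertex cover
of the strong resolving graph of `G`. -/
theorem strongResolvingSet_iff_vertexCover {V : Type*} [Fintype V] (G : SimpleGraph V)
    (hG : G.Connected) (R : Set V) :
    StrongResolvingSet G R ↔ ∀ a b : V, (srGraph G).Adj a b → a ∈ R ∨ b ∈ R := by
  constructor
  · intro h a b hab
    obtain ⟨hne, hma, hmb⟩ := hab
    obtain ⟨w, hwR, hsr⟩ := h a b hne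
    rcases hsr with hsr | hsr
    · -- dist w b + dist b a = dist w a : b on shortest w–a path, so w = b
      right
      by_contra hbR
      have hwb : w ≠ b := by rintro rfl; exact hbR hwR
      obtain ⟨z, hadj, hzd⟩ := exists_adj_closer hG hwb
      have h1 : G.dist z a ≤ G.dist b a := hmb z hadj
      have h2 : G.dist w a ≤ G.dist w z + G.dist z a := hG.dist_triangle
      omega
    · left
      by_contra haR
      have hwa : w ≠ a := by rintro rfl; exact haR hwR
      obtain ⟨z, hadj, hzd⟩ := exists_adj_closer hG hwa
      have h1 : G.dist z b ≤ G.dist a b := hma z hadj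
      have h2 : G.dist w b ≤ G.dist w z + G.dist z b := hG.dist_triangle
      omega
  · intro h u v huv
    obtain ⟨u', hu'max, hu'⟩ := exists_maxDistant hG u v
    obtain ⟨v', hv'max, hv'⟩ := exists_maxDistant hG v u'
    have cvu' : G.dist v u' = G.dist u' v := dist_comm
    have cu'v' : G.dist u' v' = G.dist v' u' := dist_comm
    have cvv' : G.dist v v' = G.dist v' v := dist_comm
    have hne : u' ≠ v' := by
      rintro rfl
      have h0 : G.dist u' u' = 0 := SimpleGraph.dist_self
      have hvu' : G.dist v u' = 0 := by omega
      have : v = u' := (hG.dist_eq_zero_iff).mp hvu'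
      subst this
      have h0' : G.dist v v = 0 := SimpleGraph.dist_self
      have huv0 : G.dist u v = 0 := by omega
      exact huv ((hG.dist_eq_zero_iff).mp (by rwa [SimpleGraph.dist_comm] at huv0)).symm
    have hmmd : MutuallyMaxDistant G u' v' := by
      constructor
      · intro z hz
        have t1 : G.dist z v' ≤ G.dist z v + G.dist v v' := hG.dist_triangle
        have h1 : G.dist z v ≤ G.dist u' v := hu'max z hz
        omega
      · exact hv'max
    rcases h u' v' ⟨hne, hmmd⟩ with hR | hR
    · exact ⟨u', hR, Or.inr hu'.symm⟩
    · refine ⟨v', hR, Or.inl ?_⟩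
      -- dist v' v + dist v u = dist v' u
      have cvu : G.dist v u = G.dist u v := dist_comm
      have cu'u : G.dist u' u = G.dist u u' := dist_comm
      have cvu'2 : G.dist v u' ≤ G.dist v u + G.dist u u' := hG.dist_triangle
      have t1 : G.dist v' u ≤ G.dist v' v + G.dist v u := hG.dist_triangle
      have t2 : G.dist v' u' ≤ G.dist v' u + G.dist u u' := hG.dist_triangle
      -- dist v u' = dist v u + dist u u' follows from hu'
      have hvu' : G.dist v u' = G.dist v u + G.dist u u' := by omega
      omega
end

section
/- If u and v are mutually maximally distant in a connected graph G, then every strong resolving set of G contains u or v. -/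
open SimpleGraph

/-- In a connected graph, from `v ≠ w` there is a neighbor of `v` strictly closer to `w`. -/
lemma exists_adj_dist_succ {V : Type*} (G : SimpleGraph V) (hG : G.Connected)
    {v w : V} (hvw : v ≠ w) : ∃ z, G.Adj v z ∧ G.dist z w + 1 = G.dist v w := by
  obtain ⟨p, hp⟩ := hG.exists_walk_length_eq_dist v w
  cases p with
  | nil => exact absurd rfl hvw
  | cons hadj q =>
    rename_i z
    refine ⟨z, hadj, le_antisymm ?_ ?_⟩
    · have h1 : G.dist z w ≤ q.length := SimpleGraph.dist_le q
      simp only [SimpleGraph.Walk.length_cons] at hp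
      omega
    · have h2 : G.dist v w ≤ G.dist v z + G.dist z w :=
        hG.dist_triangle (u := v) (v := z) (w := w)
      have h3 : G.dist v z ≤ 1 := by
        simpa using SimpleGraph.dist_le hadj.toWalk
      omega

/-- Key step: if `v` is maximally distant from `u` and `w ≠ v`, then `v` does not lie
(internally) on a shortest `w`–`u` path. -/
lemma not_between {V : Type*} (G : SimpleGraph V) (hG : G.Connected)
    {u v w : V} (hmax : MaxDistantFrom G v u) (hwv : w ≠ v)
    (heq : G.dist w v + G.dist v u = G.dist w u) : False := by
  obtain ⟨z, hadj, hz⟩ := exists_adj_dist_succ G hG (Ne.symm hwv)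
  have h1 : G.dist w u ≤ G.dist w z + G.dist z u := hG.dist_triangle (u := w) (v := z) (w := u)
  have h2 : G.dist z u ≤ G.dist v u := hmax z hadj
  have h3 : G.dist z w = G.dist w z := SimpleGraph.dist_comm ..
  have h4 : G.dist v w = G.dist w v := SimpleGraph.dist_comm ..
  omega

/-- If `u` and `v` are mutually maximally distant in a connected graph `G`, then every
strong resolving set of `G` contains `u` or `v`. -/
theorem mem_of_mutuallyMaxDistant {V : Type*} [Fintype V] (G : SimpleGraph V)
    (hG : G.Connected) (u v : V) (huv : u ≠ v) (h : MutuallyMaxDistant G u v)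
    (R : Set V) (hR : StrongResolvingSet G R) : u ∈ R ∨ v ∈ R := by
  obtain ⟨w, hwR, hres⟩ := hR u v huv
  by_cases hwu : w = u
  · exact Or.inl (hwu ▸ hwR)
  by_cases hwv : w = v
  · exact Or.inr (hwv ▸ hwR)
  exfalso
  rcases hres with heq | heq
  · exact not_between G hG h.2 hwv heq
  · exact not_between G hG h.1 hwu heq
end

section
/- Let J be obtained by gluing connected graphs G_1,...,G_k (each with at least two vertices) to a connected graph H (with at least two vertices) by identifying vertex u_i of G_i with vertex v_i of H. Then each identified vertex v_i has no incident edges in the strong resolving graph of J. -/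
open SimpleGraph

/-- The graph obtained from the disjoint union of the graphs `G i` and `H` by identifying,
for each `i`, the vertex `u i` of `G i` with the vertex `v i` of `H`.  The vertices of
`G i` other than `u i` keep their identity (as `Sum.inl ⟨i, x⟩`), the vertices of `H`
keep their identity (as `Sum.inr w`), and `u i` is identified with `v i`. -/
def glue {k : ℕ} {α : Fin k → Type*} {β : Type*}
    (G : ∀ i, SimpleGraph (α i)) (H : SimpleGraph β) (u : ∀ i, α i) (v : Fin k → β) :
    SimpleGraph ((Σ i, {x : α i // x ≠ u i}) ⊕ β) where
  Adj a b :=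
    (∃ (i : Fin k) (x y : {z : α i // z ≠ u i}), (G i).Adj x.1 y.1 ∧
        a = Sum.inl ⟨i, x⟩ ∧ b = Sum.inl ⟨i, y⟩) ∨
    (∃ (i : Fin k) (x : {z : α i // z ≠ u i}), (G i).Adj x.1 (u i) ∧
        ((a = Sum.inl ⟨i, x⟩ ∧ b = Sum.inr (v i)) ∨
         (b = Sum.inl ⟨i, x⟩ ∧ a = Sum.inr (v i)))) ∨
    (∃ w w' : β, H.Adj w w' ∧ a = Sum.inr w ∧ b = Sum.inr w')
  symm := by
    refine ⟨?_⟩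
    rintro a b (⟨i, x, y, hxy, ha, hb⟩ | ⟨i, x, hx, h | h⟩ | ⟨w, w', hww, ha, hb⟩)
    · exact Or.inl ⟨i, y, x, hxy.symm, hb, ha⟩
    · exact Or.inr (Or.inl ⟨i, x, hx, Or.inr h⟩)
    · exact Or.inr (Or.inl ⟨i, x, hx, Or.inl h⟩)
    · exact Or.inr (Or.inr ⟨w', w, hww.symm, hb, ha⟩)
  loopless := by
    refine ⟨?_⟩
    rintro a (⟨i, x, y, hxy, ha, hb⟩ | ⟨i, x, _, ⟨ha, hb⟩ | ⟨ha, hb⟩⟩ | ⟨w, w', hww, ha, hb⟩)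
    · subst ha
      injection hb with h
      injection h with h1 h2
      subst h2
      exact (G i).loopless.irrefl _ hxy
    · subst ha; simp at hb
    · subst ha; simp at hb
    · subst ha
      injection hb with h
      subst h
      exact H.loopless.irrefl _ hww

section Aux

variable {V : Type*}

lemma aux_exists_adj (G : SimpleGraph V) (hc : G.Connected) (hn : Nontrivial V) (x : V) :
    ∃ y, G.Adj x y := by
  haveI := hn
  obtain ⟨y, hxy⟩ := exists_ne x
  obtain ⟨p⟩ := hc.preconnected x y
  cases p with
  | nil => exact absurd rfl hxy
  | cons h _ => exact ⟨_, h⟩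

lemma aux_dist_lt (J : SimpleGraph V) {z c b : V} (hr : J.Reachable z b) (hzc : z ≠ c)
    (hsep : ∀ p : J.Walk z b, c ∈ p.support) : J.dist c b < J.dist z b := by
  classical
  obtain ⟨W, hW⟩ := hr.exists_walk_length_eq_dist
  have hc := hsep W
  have h1 : J.dist c b ≤ (W.dropUntil c hc).length := J.dist_le _
  have h2 : 1 ≤ (W.takeUntil c hc).length := by
    rcases Nat.eq_zero_or_pos (W.takeUntil c hc).length with h | h
    · exact absurd (SimpleGraph.Walk.eq_of_length_eq_zero h) hzc
    · exact h
  have h3 : (W.takeUntil c hc).length + (W.dropUntil c hc).length = W.length := by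
    rw [← SimpleGraph.Walk.length_append, SimpleGraph.Walk.take_spec]
  omega

end Aux

section Glue

variable {k : ℕ} {α : Fin k → Type*} {β : Type*}
  (G : ∀ i, SimpleGraph (α i)) (H : SimpleGraph β) (u : ∀ i, α i) (v : Fin k → β)

/-- The homomorphism from `H` into the glued graph. -/
def glueHomH : H →g glue G H u v where
  toFun := Sum.inr
  map_rel' := fun h => Or.inr (Or.inr ⟨_, _, h, rfl, rfl⟩)

open Classical in
/-- The homomorphism from `G j` into the glued graph. -/
noncomputable def glueHomG (j : Fin k) : G j →g glue G H u v where
  toFun x := if h : x = u j then Sum.inr (v j) else Sum.inl ⟨j, ⟨x, h⟩⟩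
  map_rel' := by
    intro a b hab
    by_cases ha : a = u j <;> by_cases hb : b = u j
    · exact absurd (ha.trans hb.symm) hab.ne
    · simp only [dif_pos ha, dif_neg hb]
      subst ha
      exact Or.inr (Or.inl ⟨j, ⟨b, hb⟩, hab.symm, Or.inr ⟨rfl, rfl⟩⟩)
    · simp only [dif_neg ha, dif_pos hb]
      subst hb
      exact Or.inr (Or.inl ⟨j, ⟨a, ha⟩, hab, Or.inl ⟨rfl, rfl⟩⟩)
    · simp only [dif_neg ha, dif_neg hb]
      exact Or.inl ⟨j, ⟨a, ha⟩, ⟨b, hb⟩, hab, rfl, rfl⟩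

lemma glue_reach (hGc : ∀ i, (G i).Connected) (hHc : H.Connected) (i : Fin k)
    (a : (Σ i, {x : α i // x ≠ u i}) ⊕ β) :
    (glue G H u v).Reachable a (Sum.inr (v i)) := by
  cases a with
  | inl p =>
    obtain ⟨j, x⟩ := p
    have r1 : (glue G H u v).Reachable (glueHomG G H u v j x.1) (glueHomG G H u v j (u j)) :=
      ((hGc j).preconnected x.1 (u j)).map (glueHomG G H u v j)
    have e1 : glueHomG G H u v j x.1 = Sum.inl ⟨j, x⟩ := dif_neg x.2
    have e2 : glueHomG G H u v j (u j) = Sum.inr (v j) := dif_pos rfl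
    rw [e1, e2] at r1
    exact r1.trans (((hHc.preconnected (v j) (v i)).map (glueHomH G H u v) : _))
  | inr w =>
    exact ((hHc.preconnected w (v i)).map (glueHomH G H u v) : _)

lemma glue_sep (i : Fin k) :
    ∀ {a b : (Σ i, {x : α i // x ≠ u i}) ⊕ β} (p : (glue G H u v).Walk a b),
      (∃ x, a = Sum.inl ⟨i, x⟩) → (∀ x, b ≠ Sum.inl ⟨i, x⟩) → Sum.inr (v i) ∈ p.support := by
  intro a b p
  induction p with
  | nil =>
    rintro ⟨x, rfl⟩ hb
    exact absurd rfl (hb x)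
  | @cons a a' b h p ih =>
    rintro ⟨x, rfl⟩ hb
    rw [SimpleGraph.Walk.support_cons, List.mem_cons]
    rcases h with ⟨i', x', y, hadj, heq, rfl⟩ | ⟨i', x', hadj, ⟨heq, rfl⟩ | ⟨heq', heq⟩⟩ |
        ⟨w, w', hww, heq, rfl⟩
    · injection heq with heq
      obtain ⟨rfl, -⟩ := Sigma.mk.inj_iff.mp heq
      exact Or.inr (ih ⟨y, rfl⟩ hb)
    · injection heq with heq
      obtain ⟨rfl, -⟩ := Sigma.mk.inj_iff.mp heq
      exact Or.inr (by rw [SimpleGraph.Walk.mem_support_iff]; exact Or.inl rfl)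
    · exact absurd heq (by simp)
    · exact absurd heq (by simp)

end Glue

/-- In the glued graph `J`, each identified vertex `v i` has no incident edges in the
strong resolving graph of `J`. -/
theorem glue_sep_vertex_isolated_in_sr {k : ℕ} {α : Fin k → Type*} {β : Type*}
    (G : ∀ i, SimpleGraph (α i)) (H : SimpleGraph β)
    (u : ∀ i, α i) (v : Fin k → β)
    (hGc : ∀ i, (G i).Connected) (hHc : H.Connected)
    (hGn : ∀ i, Nontrivial (α i)) (hHn : Nontrivial β) :
    ∀ (i : Fin k) (b : (Σ i, {x : α i // x ≠ u i}) ⊕ β),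
      ¬ (srGraph (glue G H u v)).Adj (Sum.inr (v i)) b := by
  intro i b hadj
  obtain ⟨hne, hmd, -⟩ := hadj
  cases b with
  | inl p =>
    obtain ⟨j, x⟩ := p
    by_cases hji : j = i
    · subst hji
      obtain ⟨w, hw⟩ := aux_exists_adj H hHc hHn (v j)
      have hadjz : (glue G H u v).Adj (Sum.inr (v j)) (Sum.inr w) :=
        Or.inr (Or.inr ⟨v j, w, hw, rfl, rfl⟩)
      have hsep : ∀ p : (glue G H u v).Walk (Sum.inr w) (Sum.inl ⟨j, x⟩),
          Sum.inr (v j) ∈ p.support := by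
        intro p
        have := glue_sep G H u v j p.reverse ⟨x, rfl⟩ (fun x' h => by simp at h)
        rwa [SimpleGraph.Walk.support_reverse, List.mem_reverse] at this
      have hr : (glue G H u v).Reachable (Sum.inr w) (Sum.inl ⟨j, x⟩) :=
        (hadjz.symm.reachable).trans
          ((glue_reach G H u v hGc hHc j (Sum.inl ⟨j, x⟩)).symm)
      have hlt := aux_dist_lt (glue G H u v) hr hadjz.ne' hsep
      have hle := hmd (Sum.inr w) hadjz
      omega
    · obtain ⟨y, hy⟩ := aux_exists_adj (G i) (hGc i) (hGn i) (u i)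
      have hyne : y ≠ u i := hy.ne'
      have hadjz : (glue G H u v).Adj (Sum.inr (v i)) (Sum.inl ⟨i, ⟨y, hyne⟩⟩) :=
        Or.inr (Or.inl ⟨i, ⟨y, hyne⟩, hy.symm, Or.inr ⟨rfl, rfl⟩⟩)
      have hsep : ∀ p : (glue G H u v).Walk (Sum.inl ⟨i, ⟨y, hyne⟩⟩) (Sum.inl ⟨j, x⟩),
          Sum.inr (v i) ∈ p.support := by
        intro p
        refine glue_sep G H u v i p ⟨_, rfl⟩ (fun x' h => hji ?_)
        injection h with h
        exact (Sigma.mk.inj_iff.mp h).1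
      have hr : (glue G H u v).Reachable (Sum.inl ⟨i, ⟨y, hyne⟩⟩) (Sum.inl ⟨j, x⟩) :=
        (hadjz.symm.reachable).trans
          ((glue_reach G H u v hGc hHc i (Sum.inl ⟨j, x⟩)).symm)
      have hlt := aux_dist_lt (glue G H u v) hr hadjz.ne' hsep
      have hle := hmd (Sum.inl ⟨i, ⟨y, hyne⟩⟩) hadjz
      omega
  | inr w =>
    obtain ⟨y, hy⟩ := aux_exists_adj (G i) (hGc i) (hGn i) (u i)
    have hyne : y ≠ u i := hy.ne'
    have hadjz : (glue G H u v).Adj (Sum.inr (v i)) (Sum.inl ⟨i, ⟨y, hyne⟩⟩) :=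
      Or.inr (Or.inl ⟨i, ⟨y, hyne⟩, hy.symm, Or.inr ⟨rfl, rfl⟩⟩)
    have hsep : ∀ p : (glue G H u v).Walk (Sum.inl ⟨i, ⟨y, hyne⟩⟩) (Sum.inr w),
        Sum.inr (v i) ∈ p.support := fun p =>
      glue_sep G H u v i p ⟨_, rfl⟩ (fun x' h => by simp at h)
    have hr : (glue G H u v).Reachable (Sum.inl ⟨i, ⟨y, hyne⟩⟩) (Sum.inr w) :=
      (hadjz.symm.reachable).trans
        ((glue_reach G H u v hGc hHc i (Sum.inr w)).symm)
    have hlt := aux_dist_lt (glue G H u v) hr hadjz.ne' hsep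
    have hle := hmd (Sum.inl ⟨i, ⟨y, hyne⟩⟩) hadjz
    omega
end

section
/- Let G be the n×m grid graph with n,m ≥ 2. If x is a corner vertex x_{i,j} with i∈{1,n}, j∈{1,m}, then the unique vertex maximally distant from x is the opposite corner x_{n+1−i, m+1−j}. -/
open SimpleGraph

/-- The `n × m` grid graph: vertices `(i, j)` with `0 ≤ i < n`, `0 ≤ j < m`,
adjacent iff at Manhattan distance `1`. -/
def gridGraph (n m : ℕ) : SimpleGraph (Fin n × Fin m) :=
  SimpleGraph.fromRel (fun a b => Nat.dist a.1.1 b.1.1 + Nat.dist a.2.1 b.2.1 = 1)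



lemma grid_adj_iff {n m : ℕ} (a b : Fin n × Fin m) :
    (gridGraph n m).Adj a b ↔ Nat.dist a.1.1 b.1.1 + Nat.dist a.2.1 b.2.1 = 1 := by
  simp only [gridGraph, fromRel_adj]
  constructor
  · rintro ⟨hne, h | h⟩
    · exact h
    · rw [Nat.dist_comm a.1.1, Nat.dist_comm a.2.1]; exact h
  · intro h
    refine ⟨?_, Or.inl h⟩
    rintro rfl
    simp [Nat.dist_self] at h

lemma grid_walk_len {n m : ℕ} {a b : Fin n × Fin m} (p : (gridGraph n m).Walk a b) :
    Nat.dist a.1.1 b.1.1 + Nat.dist a.2.1 b.2.1 ≤ p.length := by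
  induction p with
  | nil => simp [Nat.dist_self]
  | @cons u c v h p ih =>
    have h1 := (grid_adj_iff u c).mp h
    have t1 := Nat.dist.triangle_inequality u.1.1 c.1.1 v.1.1
    have t2 := Nat.dist.triangle_inequality u.2.1 c.2.1 v.2.1
    simp only [Walk.length_cons]
    omega

lemma grid_exists_walk {n m : ℕ} (a b : Fin n × Fin m) :
    ∃ p : (gridGraph n m).Walk a b,
      p.length = Nat.dist a.1.1 b.1.1 + Nat.dist a.2.1 b.2.1 := by
  generalize hk : Nat.dist a.1.1 b.1.1 + Nat.dist a.2.1 b.2.1 = k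
  induction k generalizing a with
  | zero =>
    have : a = b := by
      have h1 : a.1.1 = b.1.1 := by simp [Nat.dist] at hk ⊢; omega
      have h2 : a.2.1 = b.2.1 := by simp [Nat.dist] at hk ⊢; omega
      exact Prod.ext (Fin.ext h1) (Fin.ext h2)
    subst this
    exact ⟨Walk.nil, rfl⟩
  | succ k ih =>
    have hb1 := b.1.2
    have hb2 := b.2.2
    have ha1 := a.1.2
    have ha2 := a.2.2
    by_cases h : a.1.1 < b.1.1
    · set c : Fin n × Fin m := (⟨a.1.1 + 1, by omega⟩, a.2) with hc
      have hadj : (gridGraph n m).Adj a c := by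
        rw [grid_adj_iff]; simp [hc, Nat.dist]
      obtain ⟨p, hp⟩ := ih c (by simp [hc, Nat.dist] at hk ⊢; omega)
      exact ⟨Walk.cons hadj p, by simp [hp]⟩
    · by_cases h' : b.1.1 < a.1.1
      · set c : Fin n × Fin m := (⟨a.1.1 - 1, by omega⟩, a.2) with hc
        have hadj : (gridGraph n m).Adj a c := by
          rw [grid_adj_iff]; simp [hc, Nat.dist]; omega
        obtain ⟨p, hp⟩ := ih c (by simp [hc, Nat.dist] at hk ⊢; omega)
        exact ⟨Walk.cons hadj p, by simp [hp]⟩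
      · by_cases h2 : a.2.1 < b.2.1
        · set c : Fin n × Fin m := (a.1, ⟨a.2.1 + 1, by omega⟩) with hc
          have hadj : (gridGraph n m).Adj a c := by
            rw [grid_adj_iff]; simp [hc, Nat.dist]
          obtain ⟨p, hp⟩ := ih c (by simp [hc, Nat.dist] at hk ⊢; omega)
          exact ⟨Walk.cons hadj p, by simp [hp]⟩
        · by_cases h2' : b.2.1 < a.2.1
          · set c : Fin n × Fin m := (a.1, ⟨a.2.1 - 1, by omega⟩) with hc
            have hadj : (gridGraph n m).Adj a c := by
              rw [grid_adj_iff]; simp [hc, Nat.dist]; omega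
            obtain ⟨p, hp⟩ := ih c (by simp [hc, Nat.dist] at hk ⊢; omega)
            exact ⟨Walk.cons hadj p, by simp [hp]⟩
          · exfalso; simp [Nat.dist] at hk; omega

lemma grid_dist {n m : ℕ} (a b : Fin n × Fin m) :
    (gridGraph n m).dist a b = Nat.dist a.1.1 b.1.1 + Nat.dist a.2.1 b.2.1 := by
  obtain ⟨p, hp⟩ := grid_exists_walk a b
  refine le_antisymm (hp ▸ SimpleGraph.dist_le p) ?_
  obtain ⟨q, hq⟩ := Reachable.exists_walk_length_eq_dist ⟨p⟩
  exact hq ▸ grid_walk_len q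

/-- In the `n × m` grid (`n, m ≥ 2`), the unique vertex maximally distant from a corner
vertex is the opposite corner. -/
theorem grid_maxDistant_from_corner {n m : ℕ} (hn : 2 ≤ n) (hm : 2 ≤ m)
    (x : Fin n × Fin m)
    (hx1 : x.1.1 = 0 ∨ x.1.1 = n - 1) (hx2 : x.2.1 = 0 ∨ x.2.1 = m - 1) :
    {y | MaxDistantFrom (gridGraph n m) y x} =
      {(⟨n - 1 - x.1.1, by omega⟩, ⟨m - 1 - x.2.1, by omega⟩)} := by
  ext y
  have hy1 := y.1.2
  have hy2 := y.2.2
  have hx1' := x.1.2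
  have hx2' := x.2.2
  simp only [Set.mem_setOf_eq, Set.mem_singleton_iff]
  constructor
  · intro h
    have key : ∀ z, (gridGraph n m).Adj y z →
        Nat.dist z.1.1 x.1.1 + Nat.dist z.2.1 x.2.1 ≤
          Nat.dist y.1.1 x.1.1 + Nat.dist y.2.1 x.2.1 := by
      intro z hz
      have := h z hz
      rwa [grid_dist, grid_dist] at this
    have h1 : y.1.1 = n - 1 - x.1.1 := by
      by_contra hne
      rcases hx1 with hx | hx
      · -- x.1.1 = 0, so y.1.1 < n - 1; move up
        have hlt : y.1.1 < n - 1 := by omega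
        have := key (⟨y.1.1 + 1, by omega⟩, y.2)
          ((grid_adj_iff _ _).mpr (by simp [Nat.dist]))
        simp only [Nat.dist] at this
        omega
      · have hpos : 0 < y.1.1 := by omega
        have := key (⟨y.1.1 - 1, by omega⟩, y.2)
          ((grid_adj_iff _ _).mpr (by simp [Nat.dist]; omega))
        simp only [Nat.dist] at this
        omega
    have h2 : y.2.1 = m - 1 - x.2.1 := by
      by_contra hne
      rcases hx2 with hx | hx
      · have hlt : y.2.1 < m - 1 := by omega
        have := key (y.1, ⟨y.2.1 + 1, by omega⟩)
          ((grid_adj_iff _ _).mpr (by simp [Nat.dist]))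
        simp only [Nat.dist] at this
        omega
      · have hpos : 0 < y.2.1 := by omega
        have := key (y.1, ⟨y.2.1 - 1, by omega⟩)
          ((grid_adj_iff _ _).mpr (by simp [Nat.dist]; omega))
        simp only [Nat.dist] at this
        omega
    exact Prod.ext (Fin.ext h1) (Fin.ext h2)
  · intro hy
    intro z hz
    rw [grid_dist, grid_dist]
    have hz1 := z.1.2
    have hz2 := z.2.2
    have e1 : y.1.1 = n - 1 - x.1.1 := by rw [hy]
    have e2 : y.2.1 = m - 1 - x.2.1 := by rw [hy]
    simp only [Nat.dist] at *
    omega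
end

section
/- For the cycle C_n with n odd, n ≥ 3, the set of vertices maximally distant from x_i is {x_j, x_{(j+1) mod n}} where j = (i + ⌊n/2⌋) mod n, and the strong resolving graph of C_n is again a cycle on n vertices. -/
open SimpleGraph

/-- The cycle with vertices `0, …, n-1` and edges between consecutive vertices mod `n`. -/
def cycGraph (n : ℕ) : SimpleGraph (ZMod n) :=
  SimpleGraph.fromRel (fun a b => b = a + 1)

section Cyc

variable {n : ℕ}

lemma cyc_one_ne_zero (hn : 2 ≤ n) : (1 : ZMod n) ≠ 0 := by
  intro h0
  have : (n : ℕ) ∣ 1 := by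
    have := (ZMod.natCast_eq_zero_iff 1 n).mp (by exact_mod_cast h0)
    exact this
  exact absurd (Nat.le_of_dvd one_pos this) (by omega)

lemma cyc_adj (hn : 2 ≤ n) {a b : ZMod n} :
    (cycGraph n).Adj a b ↔ b = a + 1 ∨ a = b + 1 := by
  constructor
  · rintro ⟨-, h⟩; exact h
  · intro h
    refine ⟨?_, h⟩
    rintro rfl
    rcases h with h | h <;> exact cyc_one_ne_zero hn (by linear_combination -h)

lemma cyc_walk_int {a b : ZMod n} (w : (cycGraph n).Walk a b) :
    ∃ k : ℤ, (k : ZMod n) = b - a ∧ k.natAbs ≤ w.length := by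
  induction w with
  | nil => exact ⟨0, by simp, by simp⟩
  | @cons a c b h w ih =>
    obtain ⟨k, hk, hle⟩ := ih
    rcases h.2 with h1 | h1
    · subst h1
      refine ⟨k + 1, by push_cast; rw [hk]; ring, ?_⟩
      simp only [SimpleGraph.Walk.length_cons]
      omega
    · subst h1
      refine ⟨k - 1, by push_cast; rw [hk]; ring, ?_⟩
      simp only [SimpleGraph.Walk.length_cons]
      omega

lemma cyc_walk_up [NeZero n] (hn : 2 ≤ n) (a : ZMod n) (m : ℕ) :
    ∃ w : (cycGraph n).Walk a (a + (m : ZMod n)), w.length = m := by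
  induction m with
  | zero => exact ⟨SimpleGraph.Walk.nil.copy rfl (by push_cast; ring), by simp⟩
  | succ m ih =>
    obtain ⟨w, hw⟩ := ih
    have hadj : (cycGraph n).Adj (a + (m : ZMod n)) (a + ((m + 1 : ℕ) : ZMod n)) := by
      rw [cyc_adj hn]
      left; push_cast; ring
    exact ⟨w.concat hadj, by simp [hw]⟩

lemma val_natCast_eq [NeZero n] (a : ZMod n) : ((a.val : ℕ) : ZMod n) = a := by
  rw [ZMod.natCast_val, ZMod.cast_id]

lemma cyc_dist [NeZero n] (hn : 2 ≤ n) (a b : ZMod n) :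
    (cycGraph n).dist a b = min (b - a).val (n - (b - a).val) := by
  have hdc : (((b - a).val : ℕ) : ZMod n) = b - a := val_natCast_eq _
  have hdc' : (((a - b).val : ℕ) : ZMod n) = a - b := val_natCast_eq _
  obtain ⟨w1, hw1⟩ := cyc_walk_up hn a (b - a).val
  obtain ⟨w2, hw2⟩ := cyc_walk_up hn b (a - b).val
  have e1 : a + (((b - a).val : ℕ) : ZMod n) = b := by rw [hdc]; ring
  have e2 : b + (((a - b).val : ℕ) : ZMod n) = a := by rw [hdc']; ring
  have hub1 : (cycGraph n).dist a b ≤ (b - a).val := by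
    have := SimpleGraph.dist_le (w1.copy rfl e1)
    simpa [hw1] using this
  have hub2 : (cycGraph n).dist a b ≤ (a - b).val := by
    have := SimpleGraph.dist_le (w2.copy rfl e2)
    rw [SimpleGraph.dist_comm]
    simpa [hw2] using this
  have hd : (b - a).val < n := ZMod.val_lt _
  by_cases hab : b = a
  · subst hab
    simp [SimpleGraph.dist_self]
  · have hne : b - a ≠ 0 := fun h => hab (by linear_combination h)
    have hval2 : (a - b).val = n - (b - a).val := by
      rw [show a - b = -(b - a) by ring, ZMod.neg_val, if_neg hne]
    have hdpos : 0 < (b - a).val := by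
      rcases Nat.eq_zero_or_pos (b - a).val with h | h
      · exact absurd ((ZMod.val_eq_zero _).mp h) hne
      · exact h
    -- lower bound
    have hreach : (cycGraph n).Reachable a b := ⟨w1.copy rfl e1⟩
    obtain ⟨w, hwlen⟩ := hreach.exists_walk_length_eq_dist
    obtain ⟨k, hk, hkle⟩ := cyc_walk_int w
    have hdvd : (n : ℤ) ∣ (k - ((b - a).val : ℤ)) := by
      apply (ZMod.intCast_zmod_eq_zero_iff_dvd _ n).mp
      push_cast
      rw [hk, hdc]
      ring
    obtain ⟨t, ht⟩ := hdvd
    have h1 : 0 ≤ t → 0 ≤ (n : ℤ) * t := fun h => mul_nonneg (by positivity) h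
    have h2 : t < 0 → (n : ℤ) * t ≤ -n := fun h => by nlinarith [hn]
    have hlb : min (b - a).val (n - (b - a).val) ≤ k.natAbs := by
      generalize (n : ℤ) * t = m at ht h1 h2
      rcases le_or_gt 0 t with h | h
      · have := h1 h; omega
      · have := h2 h; omega
    rw [hwlen] at hkle
    omega

lemma cyc_shift_val [NeZero n] (hn : 2 ≤ n) (x y : ZMod n) :
    (x - (y + 1)).val = if (x - y).val = 0 then n - 1 else (x - y).val - 1 := by
  haveI : Fact (1 < n) := ⟨hn⟩
  split_ifs with h
  · have hxy : x - y = 0 := (ZMod.val_eq_zero _).mp h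
    have : x - (y + 1) = -1 := by linear_combination hxy
    rw [this, ZMod.neg_val, if_neg (cyc_one_ne_zero hn), ZMod.val_one]
  · have h1 : 1 ≤ (x - y).val := Nat.one_le_iff_ne_zero.mpr h
    have hd : (x - y).val < n := ZMod.val_lt _
    have : x - (y + 1) = (((x - y).val - 1 : ℕ) : ZMod n) := by
      rw [Nat.cast_sub h1, val_natCast_eq]
      push_cast
      ring
    rw [this, ZMod.val_cast_of_lt (by omega)]

lemma cyc_shift_val' [NeZero n] (hn : 2 ≤ n) (x y : ZMod n) :
    (x - (y - 1)).val = if (x - y).val = n - 1 then 0 else (x - y).val + 1 := by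
  have hd : (x - y).val < n := ZMod.val_lt _
  split_ifs with h
  · have hxy : x - y = ((n - 1 : ℕ) : ZMod n) := by rw [← h, val_natCast_eq]
    have hn0 : ((n : ℕ) : ZMod n) = 0 := ZMod.natCast_self n
    have : x - (y - 1) = 0 := by
      rw [Nat.cast_sub (by omega)] at hxy
      push_cast at hxy hn0 ⊢
      linear_combination hxy + hn0
    rw [this, ZMod.val_zero]
  · have : x - (y - 1) = (((x - y).val + 1 : ℕ) : ZMod n) := by
      push_cast
      rw [val_natCast_eq]
      ring
    rw [this, ZMod.val_cast_of_lt (by omega)]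

lemma maxdist_iff (hn : 3 ≤ n) (hodd : Odd n) (x y : ZMod n) :
    MaxDistantFrom (cycGraph n) y x ↔
      ((x - y).val = n / 2 ∨ (x - y).val = n / 2 + 1) := by
  haveI : NeZero n := ⟨by omega⟩
  have hn2 : 2 ≤ n := by omega
  obtain ⟨m, hm⟩ := hodd
  have hd : (x - y).val < n := ZMod.val_lt _
  have hadj1 : (cycGraph n).Adj y (y + 1) := (cyc_adj hn2).mpr (Or.inl rfl)
  have hadj2 : (cycGraph n).Adj y (y - 1) := (cyc_adj hn2).mpr (Or.inr (by ring))
  constructor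
  · intro h
    have h1 := h _ hadj1
    have h2 := h _ hadj2
    rw [cyc_dist hn2, cyc_dist hn2, cyc_shift_val hn2] at h1
    rw [cyc_dist hn2, cyc_dist hn2, cyc_shift_val' hn2] at h2
    have hd1 : (x - (y + 1)).val < n := ZMod.val_lt _
    split_ifs at h1 h2 <;> omega
  · intro h z hz
    rw [cyc_adj hn2] at hz
    rw [cyc_dist hn2, cyc_dist hn2]
    rcases hz with rfl | rfl
    · rw [cyc_shift_val hn2]
      split_ifs <;> omega
    · have e : x - z = x - (z + 1 - 1) := by ring
      rw [e, cyc_shift_val' hn2]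
      split_ifs <;> omega

lemma val_eq_iff [NeZero n] (a : ZMod n) (c : ℕ) (hc : c < n) :
    a.val = c ↔ a = (c : ZMod n) := by
  constructor
  · intro h; rw [← h, val_natCast_eq]
  · intro h; rw [h, ZMod.val_cast_of_lt hc]

lemma cyc_key (hn : 3 ≤ n) (hodd : Odd n) :
    ((n / 2 : ℕ) : ZMod n) + ((n / 2 : ℕ) : ZMod n) + 1 = 0 := by
  have h2 : n = 2 * (n / 2) + 1 := by
    obtain ⟨m, hm⟩ := hodd; omega
  have hn0 : ((2 * (n / 2) + 1 : ℕ) : ZMod n) = 0 := by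
    rw [← h2]; exact ZMod.natCast_self n
  push_cast at hn0
  linear_combination hn0


lemma maxdist_set (hn : 3 ≤ n) (hodd : Odd n) (x : ZMod n) :
    {y | MaxDistantFrom (cycGraph n) y x} =
      {x + ((n / 2 : ℕ) : ZMod n), x + ((n / 2 : ℕ) : ZMod n) + 1} := by
  haveI : NeZero n := ⟨by omega⟩
  have hkey := cyc_key hn hodd
  have hlt1 : n / 2 < n := by omega
  have hlt2 : n / 2 + 1 < n := by
    obtain ⟨m, hm⟩ := hodd; omega
  ext y
  simp only [Set.mem_setOf_eq, Set.mem_insert_iff, Set.mem_singleton_iff,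
    maxdist_iff hn hodd]
  rw [val_eq_iff _ _ hlt1, val_eq_iff _ _ hlt2]
  push_cast
  constructor
  · rintro (h | h)
    · right; linear_combination -h - hkey
    · left; linear_combination -h - hkey
  · rintro (h | h)
    · right; linear_combination -h - hkey
    · left; linear_combination -h - hkey

lemma sr_adj (hn : 3 ≤ n) (hodd : Odd n) (u v : ZMod n) :
    (srGraph (cycGraph n)).Adj u v ↔
      (v = u + ((n / 2 : ℕ) : ZMod n) ∨ u = v + ((n / 2 : ℕ) : ZMod n)) := by
  haveI : NeZero n := ⟨by omega⟩
  have hkey := cyc_key hn hodd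
  have hlt1 : n / 2 < n := by omega
  have hlt2 : n / 2 + 1 < n := by
    obtain ⟨m, hm⟩ := hodd; omega
  have hcval : ((n / 2 : ℕ) : ZMod n).val = n / 2 := ZMod.val_cast_of_lt hlt1
  have aux : ∀ w : ZMod n, (srGraph (cycGraph n)).Adj w (w + ((n / 2 : ℕ) : ZMod n)) := by
    intro w
    show w ≠ _ ∧ MutuallyMaxDistant (cycGraph n) w _
    refine ⟨?_, ?_, ?_⟩
    · intro h
      have hc0 : ((n / 2 : ℕ) : ZMod n) = 0 := by linear_combination -h
      rw [hc0, ZMod.val_zero] at hcval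
      omega
    · rw [maxdist_iff hn hodd]
      left
      rw [show w + ((n / 2 : ℕ) : ZMod n) - w = ((n / 2 : ℕ) : ZMod n) by ring, hcval]
    · rw [maxdist_iff hn hodd]
      right
      rw [show w - (w + ((n / 2 : ℕ) : ZMod n)) = ((n / 2 + 1 : ℕ) : ZMod n) by
        push_cast; linear_combination -hkey]
      rw [ZMod.val_cast_of_lt hlt2]
  constructor
  · intro h
    obtain ⟨hne, h1, h2⟩ : u ≠ v ∧ MutuallyMaxDistant (cycGraph n) u v := h
    rw [maxdist_iff hn hodd] at h1
    rw [val_eq_iff _ _ hlt1, val_eq_iff _ _ hlt2] at h1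
    push_cast at h1
    rcases h1 with h | h
    · left; linear_combination h
    · right; linear_combination -h - hkey
  · rintro (rfl | rfl)
    · exact aux u
    · exact (aux v).symm

lemma cyc_iso (hn : 3 ≤ n) (hodd : Odd n) :
    Nonempty (srGraph (cycGraph n) ≃g cycGraph n) := by
  haveI : NeZero n := ⟨by omega⟩
  have hkey := cyc_key hn hodd
  have hcop : Nat.Coprime (n / 2) n := by
    obtain ⟨m, hm⟩ := hodd
    have hm2 : n / 2 = m := by omega
    rw [Nat.Coprime, hm2, hm, show 2 * m + 1 = 1 + 2 * m by ring,
      Nat.gcd_add_mul_right_right, Nat.gcd_one_right]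
  set U : (ZMod n)ˣ := ZMod.unitOfCoprime (n / 2) hcop with hU
  have hUc : (U : ZMod n) = ((n / 2 : ℕ) : ZMod n) := rfl
  have hmap : ∀ a b : ZMod n,
      (srGraph (cycGraph n)).Adj ((Units.mulLeft U) a) ((Units.mulLeft U) b) ↔
        (cycGraph n).Adj a b := by
    intro a b
    simp only [Units.mulLeft_apply]
    rw [sr_adj hn hodd, cyc_adj (by omega : 2 ≤ n)]
    constructor
    · rintro (h | h)
      · left
        have h' : (U : ZMod n) * b = (U : ZMod n) * (a + 1) := by
          rw [hUc] at h ⊢; linear_combination h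
        exact (Units.mul_right_inj U).mp (by exact_mod_cast h')
      · right
        have h' : (U : ZMod n) * a = (U : ZMod n) * (b + 1) := by
          rw [hUc] at h ⊢; linear_combination h
        exact (Units.mul_right_inj U).mp (by exact_mod_cast h')
    · rintro (rfl | rfl)
      · left; rw [hUc]; ring
      · right; rw [hUc]; ring
  exact ⟨(⟨Units.mulLeft U, fun {a b} => hmap a b⟩ :
    cycGraph n ≃g srGraph (cycGraph n)).symm⟩

end Cyc

/-- For odd `n ≥ 3`, the set of vertices maximally distant from `x` in the cycle `C n`
consists of the two vertices `x + ⌊n/2⌋` and `x + ⌊n/2⌋ + 1`, and the strong resolving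
graph of `C n` is again a cycle on `n` vertices. -/
theorem cycle_odd_srGraph {n : ℕ} (hn : 3 ≤ n) (hodd : Odd n) :
    (∀ x : ZMod n, {y | MaxDistantFrom (cycGraph n) y x} =
      {x + ((n / 2 : ℕ) : ZMod n), x + ((n / 2 : ℕ) : ZMod n) + 1}) ∧
    Nonempty (srGraph (cycGraph n) ≃g cycGraph n) := by
  exact ⟨fun x => maxdist_set hn hodd x, cyc_iso hn hodd⟩
end

section
/- In a connected cograph G, two distinct vertices u and v are mutually maximally distant if and only if u and v are non-adjacent or u and v are true twins (N_G[u] = N_G[v]). -/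
open SimpleGraph

/-- A cograph: a graph with no induced path on four vertices. -/
def IsCograph {V : Type*} (G : SimpleGraph V) : Prop :=
  IsEmpty (SimpleGraph.pathGraph 4 ↪g G)


private lemma dist_getVert_le {V : Type*} {G : SimpleGraph V} (hG : G.Connected) :
    ∀ {x y : V} (p : G.Walk x y) (i : ℕ), G.dist x (p.getVert i) ≤ i := by
  intro x y p
  induction p with
  | nil => intro i; simp [SimpleGraph.Walk.getVert, SimpleGraph.dist_self]
  | @cons a b c h q ih =>
    intro i
    cases i with
    | zero => simp [SimpleGraph.Walk.getVert_zero, SimpleGraph.dist_self]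
    | succ n =>
      rw [SimpleGraph.Walk.getVert_cons_succ]
      calc G.dist a (q.getVert n) ≤ G.dist a b + G.dist b (q.getVert n) :=
            hG.dist_triangle
        _ ≤ 1 + n := by
            gcongr
            · exact le_trans (SimpleGraph.dist_le h.toWalk) (by simp)
            · exact ih n
        _ = n + 1 := Nat.add_comm _ _

private lemma getVert_dist_le {V : Type*} (G : SimpleGraph V) :
    ∀ {x y : V} (p : G.Walk x y) (i : ℕ), G.dist (p.getVert i) y ≤ p.length - i := by
  intro x y p
  induction p with
  | nil => intro i; simp [SimpleGraph.Walk.getVert, SimpleGraph.dist_self]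
  | @cons a b c h q ih =>
    intro i
    cases i with
    | zero =>
      simpa using SimpleGraph.dist_le (SimpleGraph.Walk.cons h q)
    | succ n =>
      rw [SimpleGraph.Walk.getVert_cons_succ]
      simpa using ih n

private lemma dist_getVert_eq {V : Type*} {G : SimpleGraph V} (hG : G.Connected)
    {x y : V} (p : G.Walk x y) (hp : p.length = G.dist x y) {i : ℕ} (hi : i ≤ p.length) :
    G.dist x (p.getVert i) = i := by
  refine le_antisymm (dist_getVert_le hG p i) ?_
  have h1 := getVert_dist_le G p i
  have h2 := hG.dist_triangle (u := x) (v := p.getVert i) (w := y)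
  omega

private lemma cograph_dist_le_two {V : Type*} {G : SimpleGraph V} (hG : G.Connected)
    (hco : IsCograph G) (x y : V) : G.dist x y ≤ 2 := by
  by_contra hlt
  push_neg at hlt
  obtain ⟨p, hp⟩ := hG.exists_walk_length_eq_dist x y
  have hplen : 3 ≤ p.length := by omega
  set a : Fin 4 → V := fun i => p.getVert i with ha
  have hd : ∀ i : Fin 4, G.dist x (a i) = (i : ℕ) := by
    intro i
    exact dist_getVert_eq hG p hp (by omega)
  have hinj : Function.Injective a := by
    intro i j hij
    have : (i : ℕ) = (j : ℕ) := by rw [← hd i, ← hd j, hij]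
    exact Fin.ext this
  have hiff : ∀ i j : Fin 4, G.Adj (a i) (a j) ↔ (SimpleGraph.pathGraph 4).Adj i j := by
    intro i j
    rw [SimpleGraph.pathGraph_adj]
    constructor
    · intro hadj
      have hne : (i : ℕ) ≠ (j : ℕ) := fun h => hadj.ne (congrArg a (Fin.ext h))
      have h1 : G.dist x (a j) ≤ G.dist x (a i) + G.dist (a i) (a j) := hG.dist_triangle
      have h2 : G.dist x (a i) ≤ G.dist x (a j) + G.dist (a j) (a i) := hG.dist_triangle
      have h3 : G.dist (a i) (a j) ≤ 1 := by
        simpa using SimpleGraph.dist_le hadj.toWalk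
      have h4 : G.dist (a j) (a i) ≤ 1 := by
        simpa using SimpleGraph.dist_le hadj.symm.toWalk
      rw [hd i, hd j] at h1 h2
      omega
    · intro h
      rcases h with h | h
      · have : G.Adj (p.getVert i) (p.getVert ((i : ℕ) + 1)) :=
          p.adj_getVert_succ (by omega)
        show G.Adj (p.getVert i) (p.getVert j)
        rwa [← h]
      · have : G.Adj (p.getVert j) (p.getVert ((j : ℕ) + 1)) :=
          p.adj_getVert_succ (by omega)
        show G.Adj (p.getVert i) (p.getVert j)
        rw [← h]
        exact this.symm
  exact hco.false ⟨⟨a, hinj⟩, (hiff _ _)⟩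

/-- In a connected cograph, two distinct vertices are mutually maximally distant iff
they are non-adjacent or true twins. -/
theorem cograph_mmd_iff {V : Type*} [Fintype V] (G : SimpleGraph V)
    (hG : G.Connected) (hco : IsCograph G) (u v : V) (huv : u ≠ v) :
    MutuallyMaxDistant G u v ↔
      (¬ G.Adj u v ∨ (G.Adj u v ∧ ∀ w : V, (w = u ∨ G.Adj u w) ↔ (w = v ∨ G.Adj v w))) := by
  have d2 : ∀ x y : V, G.dist x y ≤ 2 := cograph_dist_le_two hG hco
  have dist2 : ∀ x y : V, x ≠ y → ¬ G.Adj x y → G.dist x y = 2 := by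
    intro x y hne hadj
    have h0 : G.dist x y ≠ 0 := fun h => hne (hG.dist_eq_zero_iff.mp h)
    have h1 : G.dist x y ≠ 1 := fun h => hadj (SimpleGraph.dist_eq_one_iff_adj.mp h)
    have := d2 x y; omega
  constructor
  · rintro ⟨h1, h2⟩
    by_cases hadj : G.Adj u v
    · right
      refine ⟨hadj, fun w => ?_⟩
      have hduv : G.dist u v = 1 := SimpleGraph.dist_eq_one_iff_adj.mpr hadj
      have hdvu : G.dist v u = 1 := SimpleGraph.dist_eq_one_iff_adj.mpr hadj.symm
      constructor
      · rintro (rfl | hw)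
        · exact Or.inr hadj.symm
        · by_cases hwv : w = v
          · exact Or.inl hwv
          · right
            by_contra hvw
            have ha := h1 w hw
            have hb := dist2 w v hwv (fun h => hvw h.symm)
            rw [hduv] at ha
            omega
      · rintro (rfl | hw)
        · exact Or.inr hadj
        · by_cases hwu : w = u
          · exact Or.inl hwu
          · right
            by_contra huw
            have ha := h2 w hw
            have hb := dist2 w u hwu (fun h => huw h.symm)
            rw [hdvu] at ha
            omega
    · left; exact hadj
  · rintro (hadj | ⟨hadj, htw⟩)
    · have hduv := dist2 u v huv hadj
      have hdvu : G.dist v u = 2 := by rw [SimpleGraph.dist_comm]; exact hduv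
      constructor
      · intro z _; rw [hduv]; exact d2 z v
      · intro z _; rw [hdvu]; exact d2 z u
    · have hduv : G.dist u v = 1 := SimpleGraph.dist_eq_one_iff_adj.mpr hadj
      have hdvu : G.dist v u = 1 := SimpleGraph.dist_eq_one_iff_adj.mpr hadj.symm
      constructor
      · intro z hz
        rcases (htw z).mp (Or.inr hz) with rfl | hvz
        · simp [SimpleGraph.dist_self]
        · rw [hduv, SimpleGraph.dist_eq_one_iff_adj.mpr hvz.symm]
      · intro z hz
        rcases (htw z).mpr (Or.inr hz) with rfl | huz
        · simp [SimpleGraph.dist_self]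
        · rw [hdvu, SimpleGraph.dist_eq_one_iff_adj.mpr huz.symm]
end

section
/- The strong resolving graph of a connected cograph is again a cograph. -/
open SimpleGraph

private lemma distGetVertLe {V : Type*} {G : SimpleGraph V} (hG : G.Connected)
    {u v : V} (p : G.Walk u v) : ∀ i, G.dist u (p.getVert i) ≤ i := by
  intro i
  induction i with
  | zero => simp
  | succ i ih =>
    by_cases h : i < p.length
    · have hadj := p.adj_getVert_succ h
      have h1 : G.dist (p.getVert i) (p.getVert (i+1)) = 1 := dist_eq_one_iff_adj.mpr hadj
      have := hG.dist_triangle (u := u) (v := p.getVert i) (w := p.getVert (i+1))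
      omega
    · have h1 : p.getVert (i+1) = v := p.getVert_of_length_le (by omega)
      have h2 : p.getVert i = v := p.getVert_of_length_le (by omega)
      rw [h1, ← h2]
      omega

private lemma distGetVert {V : Type*} {G : SimpleGraph V} (hG : G.Connected)
    {u v : V} (p : G.Walk u v) (hp : p.length = G.dist u v) {i : ℕ} (hi : i ≤ p.length) :
    G.dist u (p.getVert i) = i := by
  have hle := distGetVertLe hG p i
  have hrev := distGetVertLe hG p.reverse (p.length - i)
  rw [Walk.getVert_reverse] at hrev
  have hii : p.length - (p.length - i) = i := by omega
  rw [hii] at hrev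
  have htri := hG.dist_triangle (u := u) (v := p.getVert i) (w := v)
  rw [dist_comm (u := v)] at hrev
  omega

private lemma diamTwo {V : Type*} {G : SimpleGraph V} (hG : G.Connected)
    (hco : IsEmpty (SimpleGraph.pathGraph 4 ↪g G)) (u v : V) : G.dist u v ≤ 2 := by
  by_contra h
  push_neg at h
  obtain ⟨p, hp⟩ := hG.exists_walk_length_eq_dist u v
  have hlen : 3 ≤ p.length := by omega
  have hd : ∀ i, i ≤ p.length → G.dist u (p.getVert i) = i := fun i hi => distGetVert hG p hp hi
  have hadj : ∀ i, i < p.length → G.Adj (p.getVert i) (p.getVert (i+1)) := fun i hi => p.adj_getVert_succ hi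
  have hna : ∀ i j, j ≤ p.length → i + 2 ≤ j → ¬ G.Adj (p.getVert i) (p.getVert j) := by
    intro i j hj hij hA
    have h1 : G.dist (p.getVert i) (p.getVert j) = 1 := dist_eq_one_iff_adj.mpr hA
    have h2 := hG.dist_triangle (u := u) (v := p.getVert i) (w := p.getVert j)
    have h3 := hd i (by omega)
    have h4 := hd j hj
    omega
  have hinj : ∀ i j, i ≤ p.length → j ≤ p.length → p.getVert i = p.getVert j → i = j := by
    intro i j hi hj hij
    have h3 := hd i hi
    have h4 := hd j hj
    rw [hij] at h3
    omega
  refine hco.elim ?_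
  refine ⟨⟨fun i => p.getVert i.val, ?_⟩, ?_⟩
  · intro a b hab
    exact Fin.ext (hinj a b (by omega) (by omega) hab)
  · intro a b
    rw [pathGraph_adj]
    constructor
    · intro hA
      by_contra hc
      push_neg at hc
      rcases Nat.lt_or_ge a.val b.val with hlt | hge
      · exact hna a.val b.val (by omega) (by omega) hA
      · rcases Nat.lt_or_ge b.val a.val with hlt2 | hge2
        · exact hna b.val a.val (by omega) (by omega) hA.symm
        · have : a.val = b.val := by omega
          exact G.loopless.irrefl _ (by rw [Fin.ext this] at hA; exact hA)
    · rintro (hab | hab)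
      · have := hadj a.val (by omega)
        rwa [hab] at this
      · have := hadj b.val (by omega)
        rw [hab] at this
        exact this.symm

/-- true twins (including adjacency) -/
private def Twins {V : Type*} (G : SimpleGraph V) (u v : V) : Prop :=
  G.Adj u v ∧ ∀ z, z ≠ u → z ≠ v → (G.Adj u z ↔ G.Adj v z)

private lemma twins_symm {V : Type*} {G : SimpleGraph V} {u v : V} (h : Twins G u v) :
    Twins G v u := ⟨h.1.symm, fun z h1 h2 => (h.2 z h2 h1).symm⟩

private lemma twins_trans {V : Type*} {G : SimpleGraph V} {a b c : V}
    (hab : Twins G a b) (hbc : Twins G b c) (hac : a ≠ c) : Twins G a c := by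
  refine ⟨?_, ?_⟩
  · exact (hab.2 c (Ne.symm hac) hbc.1.ne').mpr hbc.1
  · intro z hza hzc
    by_cases hzb : z = b
    · subst hzb
      exact ⟨fun _ => hbc.1.symm, fun _ => hab.1⟩
    · exact (hab.2 z hza hzb).trans (hbc.2 z hzb hzc)

private lemma mmd_of_not_adj {V : Type*} {G : SimpleGraph V} (hG : G.Connected)
    (hdiam : ∀ x y : V, G.dist x y ≤ 2) {u v : V} (hne : u ≠ v) (h : ¬ G.Adj u v) :
    MutuallyMaxDistant G u v := by
  have h2 : 2 ≤ G.dist u v := by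
    have h0 : G.dist u v ≠ 0 := fun hh => hne (hG.dist_eq_zero_iff.mp hh)
    have h1 : G.dist u v ≠ 1 := fun hh => h (dist_eq_one_iff_adj.mp hh)
    omega
  constructor
  · intro z _; exact le_trans (hdiam z v) h2
  · intro z _
    rw [SimpleGraph.dist_comm] at h2
    exact le_trans (hdiam z u) h2

private lemma mmd_of_twins {V : Type*} {G : SimpleGraph V} (hG : G.Connected)
    {u v : V} (h : Twins G u v) : MutuallyMaxDistant G u v := by
  have hd : G.dist u v = 1 := dist_eq_one_iff_adj.mpr h.1
  have hd' : G.dist v u = 1 := dist_eq_one_iff_adj.mpr h.1.symm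
  constructor
  · intro z hz
    rw [hd]
    by_cases hzv : z = v
    · subst hzv; simp [SimpleGraph.dist_self]
    · have : G.Adj v z := (h.2 z hz.ne' hzv).mp hz
      rw [SimpleGraph.dist_comm, dist_eq_one_iff_adj.mpr this]
  · intro z hz
    rw [hd']
    by_cases hzu : z = u
    · subst hzu; simp [SimpleGraph.dist_self]
    · have : G.Adj u z := (h.2 z hzu hz.ne').mpr hz
      rw [SimpleGraph.dist_comm, dist_eq_one_iff_adj.mpr this]

private lemma twins_of_mmd_adj {V : Type*} {G : SimpleGraph V} (hG : G.Connected)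
    {u v : V} (hmmd : MutuallyMaxDistant G u v) (hadj : G.Adj u v) : Twins G u v := by
  have hd : G.dist u v = 1 := dist_eq_one_iff_adj.mpr hadj
  have key : ∀ x y : V, G.Adj x y → MaxDistantFrom G x y → ∀ z, z ≠ y → G.Adj x z → G.Adj y z := by
    intro x y hxy hmd z hzy hxz
    have h1 := hmd z hxz
    rw [dist_eq_one_iff_adj.mpr hxy] at h1
    have h0 : G.dist z y ≠ 0 := fun hh => hzy (hG.dist_eq_zero_iff.mp hh)
    have : G.dist z y = 1 := by omega
    exact (dist_eq_one_iff_adj.mp this).symm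
  refine ⟨hadj, fun z hzu hzv => ⟨fun h => key u v hadj hmmd.1 z hzv h, fun h => key v u hadj.symm hmmd.2 z hzu h⟩⟩


/-- The strong resolving graph of a connected cograph is again a cograph. -/
theorem srGraph_cograph {V : Type*} [Fintype V] (G : SimpleGraph V)
    (hG : G.Connected) (hco : IsCograph G) : IsCograph (srGraph G) := by
  constructor
  intro e
  have hdiam : ∀ x y : V, G.dist x y ≤ 2 := fun x y => diamTwo hG hco x y
  set a := e 0 with ha
  set b := e 1 with hb
  set c := e 2 with hc
  set d := e 3 with hd
  have hne : ∀ (i j : Fin 4), i ≠ j → e i ≠ e j := fun i j hij h => hij (e.injective h)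
  have hAB : (srGraph G).Adj a b := e.map_rel_iff.mpr (by rw [pathGraph_adj]; decide)
  have hBC : (srGraph G).Adj b c := e.map_rel_iff.mpr (by rw [pathGraph_adj]; decide)
  have hCD : (srGraph G).Adj c d := e.map_rel_iff.mpr (by rw [pathGraph_adj]; decide)
  have hnAC : ¬ (srGraph G).Adj a c := fun h => by
    have := e.map_rel_iff.mp h; rw [pathGraph_adj] at this; revert this; decide
  have hnBD : ¬ (srGraph G).Adj b d := fun h => by
    have := e.map_rel_iff.mp h; rw [pathGraph_adj] at this; revert this; decide
  have hnAD : ¬ (srGraph G).Adj a d := fun h => by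
    have := e.map_rel_iff.mp h; rw [pathGraph_adj] at this; revert this; decide
  have key : ∀ x y : V, x ≠ y → ¬ (srGraph G).Adj x y → G.Adj x y ∧ ¬ Twins G x y := by
    intro x y hxy hna
    constructor
    · by_contra hadj
      exact hna (And.intro hxy (mmd_of_not_adj hG hdiam hxy hadj))
    · intro ht
      exact hna (And.intro hxy (mmd_of_twins hG ht))
  have hedge : ∀ x y : V, (srGraph G).Adj x y → G.Adj x y → Twins G x y :=
    fun x y h hadj => twins_of_mmd_adj hG (show x ≠ y ∧ MutuallyMaxDistant G x y from h).2 hadj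
  obtain ⟨hGac, _⟩ := key a c (hne 0 2 (by decide)) hnAC
  obtain ⟨hGbd, _⟩ := key b d (hne 1 3 (by decide)) hnBD
  obtain ⟨hGad, hTad⟩ := key a d (hne 0 3 (by decide)) hnAD
  have hbc' : ¬ G.Adj b c := by
    intro hbc
    have tbc := hedge b c hBC hbc
    have hba : G.Adj a b := ((tbc.2 a (hne 0 1 (by decide)) (hne 0 2 (by decide))).mpr hGac.symm).symm
    have tab := hedge a b hAB hba
    have hGcd : G.Adj c d := (tbc.2 d (hne 3 1 (by decide)) (hne 3 2 (by decide))).mp hGbd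
    have tcd := hedge c d hCD hGcd
    have tac := twins_trans tab tbc (hne 0 2 (by decide))
    exact hTad (twins_trans tac tcd (hne 0 3 (by decide)))
  have hab' : ¬ G.Adj a b := fun hab =>
    hbc' (((hedge a b hAB hab).2 c (hne 2 0 (by decide)) (hne 2 1 (by decide))).mp hGac)
  have hcd' : ¬ G.Adj c d := fun hcd =>
    hbc' ((((hedge c d hCD hcd).2 b (hne 1 2 (by decide)) (hne 1 3 (by decide))).mpr hGbd.symm).symm)
  -- now c - a - d - b is an induced path in G
  refine hco.elim ⟨⟨![c, a, d, b], ?_⟩, ?_⟩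
  · intro x y h
    fin_cases x <;> fin_cases y <;> simp_all <;>
      first
        | rfl
        | exact absurd h (hne 2 0 (by decide))
        | exact absurd h (hne 0 2 (by decide))
        | exact absurd h (hne 2 3 (by decide))
        | exact absurd h (hne 3 2 (by decide))
        | exact absurd h (hne 2 1 (by decide))
        | exact absurd h (hne 1 2 (by decide))
        | exact absurd h (hne 0 3 (by decide))
        | exact absurd h (hne 3 0 (by decide))
        | exact absurd h (hne 0 1 (by decide))
        | exact absurd h (hne 1 0 (by decide))
        | exact absurd h (hne 1 3 (by decide))
        | exact absurd h (hne 3 1 (by decide))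
  · intro x y
    fin_cases x <;> fin_cases y <;>
      simp only [Matrix.cons_val_zero, Matrix.cons_val_one, Matrix.head_cons,
        Matrix.cons_val_two, Matrix.tail_cons, Matrix.cons_val_three, pathGraph_adj] <;>
      constructor <;> intro h <;>
      first
        | decide
        | omega
        | exact absurd h G.irrefl
        | exact hGac.symm
        | exact hGad
        | exact hGbd.symm
        | exact absurd h hcd'
        | exact absurd h hab'
        | exact absurd h hbc'
        | exact absurd h.symm hcd'
        | exact absurd h.symm hab'
        | exact absurd h.symm hbc'
        | exact absurd h.symm (by omega)
        | exact hGac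
        | exact hGad.symm
        | exact hGbd
end

section
/- Let G be a connected graph and R = {w_1,...,w_k} a strong resolving set of G. Then for all vertices u, v: d_G(u,v) = max over 1≤i≤k of |d_G(u,w_i) − d_G(v,w_i)|. -/
open SimpleGraph

/-- If `R = {w_1, …, w_k}` is a strong resolving set of a connected graph `G`, then for
all vertices `u, v`: `d(u,v) = max_i |d(u,w_i) − d(v,w_i)|`. -/
theorem dist_eq_sup_abs_sub {V : Type*} [Fintype V] (G : SimpleGraph V) (hG : G.Connected)
    (R : Finset V) (hR : R.Nonempty) (hsr : StrongResolvingSet G ↑R) (u v : V) :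
    (G.dist u v : ℤ) =
      R.sup' hR (fun w => |(G.dist u w : ℤ) - (G.dist v w : ℤ)|) := by
  apply le_antisymm
  · rcases eq_or_ne u v with rfl | huv
    · simp only [SimpleGraph.dist_self, Nat.cast_zero]
      exact Finset.le_sup'_of_le _ hR.choose_spec (abs_nonneg _)
    · obtain ⟨w, hwR, hw⟩ := hsr u v huv
      refine Finset.le_sup'_of_le _ hwR ?_
      rcases hw with h | h
      · have := congrArg (Nat.cast : ℕ → ℤ) h
        push_cast at this
        have c1 : G.dist w v = G.dist v w := SimpleGraph.dist_comm ..
        have c2 : G.dist w u = G.dist u w := SimpleGraph.dist_comm ..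
        have c3 : G.dist v u = G.dist u v := SimpleGraph.dist_comm ..
        rw [c1, c2, c3] at this
        rw [abs_sub_comm]
        calc (G.dist u v : ℤ) = (G.dist u w : ℤ) - G.dist v w := by linarith
          _ ≤ |(G.dist v w : ℤ) - G.dist u w| := by rw [abs_sub_comm]; exact le_abs_self _
      · have := congrArg (Nat.cast : ℕ → ℤ) h
        push_cast at this
        have c1 : G.dist w v = G.dist v w := SimpleGraph.dist_comm ..
        have c2 : G.dist w u = G.dist u w := SimpleGraph.dist_comm ..
        rw [c1, c2] at this
        calc (G.dist u v : ℤ) = (G.dist v w : ℤ) - G.dist u w := by linarith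
          _ ≤ |(G.dist u w : ℤ) - G.dist v w| := by rw [abs_sub_comm]; exact le_abs_self _
  · apply Finset.sup'_le
    intro w hw
    rw [abs_sub_le_iff]
    constructor
    · have h1 : G.dist u w ≤ G.dist u v + G.dist v w := hG.dist_triangle
      have := (Nat.cast_le (α := ℤ)).mpr h1
      push_cast at this
      linarith
    · have h1 : G.dist v w ≤ G.dist v u + G.dist u w := hG.dist_triangle
      have := (Nat.cast_le (α := ℤ)).mpr h1
      push_cast at this
      have c3 : G.dist v u = G.dist u v := SimpleGraph.dist_comm ..
      rw [c3] at this
      linarith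
end
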